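/- Let K be a 3DM instance on node sets of size q and σ(K) the associated spanUFP instance. If σ(K) has a feasible solution consisting of p+7q tasks (for some integer p ≥ 0), then K has a hypermatching of size at least p; concretely, the set M of hyperedges h_ℓ ∈ E such that both t_L(h_ℓ) and t_R(h_ℓ) are scheduled inside a block containing exactly 8 scheduled tasks is a hypermatching of size at least p. -/

import Mathlib

/-- `ρ = max {29, 3q}`. -/
def rho (q : ℕ) : ℕ := max 29 (3 * q)

/-- The number `x'_i = iρ + 1` associated to the node `x_i`. -/
def xnum (q i : ℕ) : ℤ := (i : ℤ) * (rho q : ℤ) + 1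

/-- The number `y'_j = jρ² + 2` associated to the node `y_j`. -/
def ynum (q j : ℕ) : ℤ := (j : ℤ) * (rho q : ℤ) ^ 2 + 2

/-- The number `z'_k = kρ³ + 4` associated to the node `z_k`. -/
def znum (q k : ℕ) : ℤ := (k : ℤ) * (rho q : ℤ) ^ 3 + 4

/-- The number `h'_ℓ = -iρ - jρ² - kρ³ - 7` associated to the hyperedge `h_ℓ = (x_i, y_j, z_k)`. -/
def hnum (q : ℕ) (h : ℕ × ℕ × ℕ) : ℤ :=
  -((h.1 : ℤ) * (rho q : ℤ)) - (h.2.1 : ℤ) * (rho q : ℤ) ^ 2 - (h.2.2 : ℤ) * (rho q : ℤ) ^ 3 - 7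

/-- The set `Q(K)` of the `3q + m` integers associated to a 3DM instance `K = (q, E)`. -/
def QK (q : ℕ) (E : Finset (ℕ × ℕ × ℕ)) : Finset ℤ :=
  ((Finset.Icc 1 q).image (xnum q)) ∪ ((Finset.Icc 1 q).image (ynum q)) ∪
    ((Finset.Icc 1 q).image (znum q)) ∪ (E.image (hnum q))

/-- `(q, E)` is a 3DM instance: every hyperedge is a triple of node indices in `{1, …, q}`
(`X`, `Y` and `Z` are identified with `{1, …, q}`). -/
def ValidE (q : ℕ) (E : Finset (ℕ × ℕ × ℕ)) : Prop :=
  ∀ h ∈ E, h.1 ∈ Finset.Icc 1 q ∧ h.2.1 ∈ Finset.Icc 1 q ∧ h.2.2 ∈ Finset.Icc 1 q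

/-- A hypermatching: no two distinct hyperedges share a node. -/
def Matching (M : Finset (ℕ × ℕ × ℕ)) : Prop :=
  ∀ h ∈ M, ∀ h' ∈ M, h ≠ h' → h.1 ≠ h'.1 ∧ h.2.1 ≠ h'.2.1 ∧ h.2.2 ≠ h'.2.2

/-- `μ = 1 + max_{u' ∈ Q(K)} 10|u'|`. -/
def mu (q : ℕ) (E : Finset (ℕ × ℕ × ℕ)) : ℕ :=
  1 + (QK q E).sup (fun u => 10 * u.natAbs)

/-- `A = 5μ + 4`. -/
def Aval (q : ℕ) (E : Finset (ℕ × ℕ × ℕ)) : ℕ := 5 * mu q E + 4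

/-- The path of `σ(K)` has `(2A+1)q - 1` edges; edges are identified with the
integers `0, 1, …, (2A+1)q - 2`. -/
def numEdges (q : ℕ) (E : Finset (ℕ × ℕ × ℕ)) : ℤ := (2 * (Aval q E : ℤ) + 1) * q - 1

/-- The capacity profile of `σ(K)`: within each block of `2A` consecutive edges, the
leftmost `A` edges have capacity `4A + 4` and the rightmost `A` edges have capacity `4A`;
blocks are separated by single edges of capacity `0`. -/
def cap (q : ℕ) (E : Finset (ℕ × ℕ × ℕ)) (e : ℤ) : ℤ :=
  let A : ℤ := (Aval q E : ℤ)
  let r := e % (2 * A + 1)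
  if r < A then 4 * A + 4 else if r < 2 * A then 4 * A else 0

/-- An element `u ∈ X ∪ Y ∪ Z ∪ E` of the 3DM instance. -/
inductive Elem where
  | X : ℕ → Elem
  | Y : ℕ → Elem
  | Z : ℕ → Elem
  | H : ℕ × ℕ × ℕ → Elem
deriving DecidableEq

/-- The number `u' ∈ Q(K)` associated to `u ∈ X ∪ Y ∪ Z ∪ E`. -/
def elemVal (q : ℕ) : Elem → ℤ
  | .X i => xnum q i
  | .Y j => ynum q j
  | .Z k => znum q k
  | .H h => hnum q h

/-- `u` is an actual element of the instance `(q, E)`. -/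
def validElem (q : ℕ) (E : Finset (ℕ × ℕ × ℕ)) : Elem → Prop
  | .X i => i ∈ Finset.Icc 1 q
  | .Y j => j ∈ Finset.Icc 1 q
  | .Z k => k ∈ Finset.Icc 1 q
  | .H h => h ∈ E

/-- A task of `σ(K)` is a pair `(u, s)` with `u ∈ X ∪ Y ∪ Z ∪ E`; `s = true` encodes the
task `t_L(u)` and `s = false` encodes the task `t_R(u)`. All tasks have weight 1. -/
abbrev UTask := Elem × Bool

/-- The length of a task: `t_L(u)` has length `A - 10u'`, `t_R(u)` has length `A + 10u'`. -/
def taskLen (q : ℕ) (E : Finset (ℕ × ℕ × ℕ)) (t : UTask) : ℤ :=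
  if t.2 then (Aval q E : ℤ) - 10 * elemVal q t.1
  else (Aval q E : ℤ) + 10 * elemVal q t.1

/-- The demand of a task: `t_L(u)` has demand `A + 10u' + 1`, `t_R(u)` has demand `A - 10u'`. -/
def taskDem (q : ℕ) (E : Finset (ℕ × ℕ × ℕ)) (t : UTask) : ℤ :=
  if t.2 then (Aval q E : ℤ) + 10 * elemVal q t.1 + 1
  else (Aval q E : ℤ) - 10 * elemVal q t.1

/-- The schedule of task `t`: the contiguous interval of `taskLen` edges starting at
edge `start t`. -/
noncomputable def sched (q : ℕ) (E : Finset (ℕ × ℕ × ℕ)) (start : UTask → ℤ) (t : UTask) : Finset ℤ :=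
  Finset.Ico (start t) (start t + taskLen q E t)

/-- `(S, start)` is a feasible solution of `σ(K)`: every selected task is a task of the
instance, is scheduled (contiguously, with exactly its length) within the path, and on every
edge `e` the total demand of the selected tasks whose schedule contains `e` is at most the
capacity of `e`. -/
def Feasible (q : ℕ) (E : Finset (ℕ × ℕ × ℕ)) (S : Finset UTask) (start : UTask → ℤ) : Prop :=
  (∀ t ∈ S, validElem q E t.1) ∧
  (∀ t ∈ S, 0 ≤ start t ∧ start t + taskLen q E t ≤ numEdges q E) ∧
  (∀ e : ℤ, 0 ≤ e → e < numEdges q E →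
    ∑ t ∈ S.filter (fun t => e ∈ sched q E start t), taskDem q E t ≤ cap q E e)

/-- The first edge of the `b`-th block (`b ∈ {0, …, q-1}`). -/
def blockStart (q : ℕ) (E : Finset (ℕ × ℕ × ℕ)) (b : ℕ) : ℤ :=
  (b : ℤ) * (2 * (Aval q E : ℤ) + 1)

/-- The `b`-th block of `2A` consecutive edges (`b ∈ {0, …, q-1}`). -/
noncomputable def block (q : ℕ) (E : Finset (ℕ × ℕ × ℕ)) (b : ℕ) : Finset ℤ :=
  Finset.Ico (blockStart q E b) (blockStart q E b + 2 * (Aval q E : ℤ))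

-- ACTUAL AUX START
def lowE : Elem → ℤ
  | .X _ => 1 | .Y _ => 2 | .Z _ => 4 | .H _ => -7
def d1E : Elem → ℤ
  | .X i => i | .Y _ => 0 | .Z _ => 0 | .H h => -(h.1 : ℤ)
def d2E : Elem → ℤ
  | .X _ => 0 | .Y j => j | .Z _ => 0 | .H h => -(h.2.1 : ℤ)
def d3E : Elem → ℤ
  | .X _ => 0 | .Y _ => 0 | .Z k => k | .H h => -(h.2.2 : ℤ)
def typE : Elem → ℕ
  | .X _ => 0 | .Y _ => 1 | .Z _ => 2 | .H _ => 3

lemma rho29 (q : ℕ) : (29 : ℤ) ≤ (rho q : ℤ) := by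
  have : 29 ≤ rho q := le_max_left _ _
  exact_mod_cast this

lemma rho3q (q : ℕ) : 3 * (q : ℤ) ≤ (rho q : ℤ) := by
  have : 3 * q ≤ rho q := le_max_right _ _
  exact_mod_cast this

lemma elemVal_decomp (q : ℕ) (u : Elem) :
    elemVal q u = lowE u + d1E u * (rho q : ℤ) + d2E u * (rho q : ℤ)^2 + d3E u * (rho q : ℤ)^3 := by
  cases u <;> simp [elemVal, xnum, ynum, znum, hnum, lowE, d1E, d2E, d3E] <;> ring

lemma digits3 (r c1 c2 c3 : ℤ) (hr : 0 < r) (h1 : |c1| < r) (h2 : |c2| < r)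
    (h : c1 + c2*r + c3*r^2 = 0) : c1 = 0 ∧ c2 = 0 ∧ c3 = 0 := by
  have hd : r ∣ c1 := ⟨-(c2 + c3*r), by linarith [h, sq r]⟩
  have hc1 : c1 = 0 := Int.eq_zero_of_abs_lt_dvd hd h1
  have h' : c2 + c3 * r = 0 := by
    have : r * (c2 + c3*r) = 0 := by rw [hc1] at h; ring_nf; ring_nf at h; linarith
    rcases mul_eq_zero.mp this with h'' | h''
    · omega
    · exact h''
  have hd2 : r ∣ c2 := ⟨-c3, by linarith⟩
  have hc2 : c2 = 0 := Int.eq_zero_of_abs_lt_dvd hd2 h2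
  have : c3 = 0 := by
    have : c3 * r = 0 := by rw [hc2] at h'; linarith
    rcases mul_eq_zero.mp this with h'' | h''
    · exact h''
    · omega
  exact ⟨hc1, hc2, this⟩

lemma noOpp (q : ℕ) (u v : Elem) : elemVal q u + elemVal q v ≠ 0 := by
  intro h
  rw [elemVal_decomp, elemVal_decomp] at h
  set r := (rho q : ℤ) with hrdef
  have hr : (29:ℤ) ≤ r := rho29 q
  have hd : r ∣ (lowE u + lowE v) :=
    ⟨-(d1E u + d1E v + (d2E u + d2E v) * r + (d3E u + d3E v) * r^2), by ring_nf; ring_nf at h; linarith⟩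
  have hlow : lowE u + lowE v = 0 := by
    apply Int.eq_zero_of_abs_lt_dvd hd
    have h1 : lowE u ≤ 4 ∧ -7 ≤ lowE u := by cases u <;> simp [lowE]
    have h2 : lowE v ≤ 4 ∧ -7 ≤ lowE v := by cases v <;> simp [lowE]
    rw [abs_lt]; omega
  cases u <;> cases v <;> simp [lowE] at hlow

lemma valid_q_pos (q : ℕ) (E : Finset (ℕ × ℕ × ℕ)) (hE : ValidE q E) (u : Elem)
    (hu : validElem q E u) : 1 ≤ q := by
  cases u with
  | X i => simp only [validElem, Finset.mem_Icc] at hu; omega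
  | Y j => simp only [validElem, Finset.mem_Icc] at hu; omega
  | Z k => simp only [validElem, Finset.mem_Icc] at hu; omega
  | H h => have := hE h hu; simp only [Finset.mem_Icc] at this; omega

lemma digit_bd (q : ℕ) (E : Finset (ℕ × ℕ × ℕ)) (hE : ValidE q E) (u : Elem)
    (hu : validElem q E u) : |d1E u| ≤ (q:ℤ) ∧ |d2E u| ≤ (q:ℤ) ∧ |d3E u| ≤ (q:ℤ) := by
  cases u with
  | X i => simp only [validElem, Finset.mem_Icc] at hu
           simp [d1E, d2E, d3E, abs_le]; omega
  | Y j => simp only [validElem, Finset.mem_Icc] at hu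
           simp [d1E, d2E, d3E, abs_le]; omega
  | Z k => simp only [validElem, Finset.mem_Icc] at hu
           simp [d1E, d2E, d3E, abs_le]; omega
  | H h => have := hE h hu
           simp only [Finset.mem_Icc] at this
           simp [d1E, d2E, d3E, abs_le]; omega

lemma valInj (q : ℕ) (E : Finset (ℕ × ℕ × ℕ)) (hE : ValidE q E) (u v : Elem)
    (hu : validElem q E u) (hv : validElem q E v)
    (h : elemVal q u = elemVal q v) : u = v := by
  have hdec := elemVal_decomp q u
  have hdec2 := elemVal_decomp q v
  set r := (rho q : ℤ) with hrdef
  have hr : (29:ℤ) ≤ r := rho29 q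
  have h3q : 3 * (q:ℤ) ≤ r := rho3q q
  have hqpos : 1 ≤ q := valid_q_pos q E hE u hu
  have heq : (lowE u - lowE v) + (d1E u - d1E v) * r + (d2E u - d2E v) * r^2
      + (d3E u - d3E v) * r^3 = 0 := by rw [hdec, hdec2] at h; ring_nf; ring_nf at h; linarith
  have hd : r ∣ (lowE u - lowE v) :=
    ⟨-((d1E u - d1E v) + (d2E u - d2E v) * r + (d3E u - d3E v) * r^2), by ring_nf; ring_nf at heq; linarith⟩
  have hlow : lowE u - lowE v = 0 := by
    apply Int.eq_zero_of_abs_lt_dvd hd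
    have h1 : lowE u ≤ 4 ∧ -7 ≤ lowE u := by cases u <;> simp [lowE]
    have h2 : lowE v ≤ 4 ∧ -7 ≤ lowE v := by cases v <;> simp [lowE]
    rw [abs_lt]; omega
  have hbu := digit_bd q E hE u hu
  have hbv := digit_bd q E hE v hv
  have hq1 : (1:ℤ) ≤ (q:ℤ) := by exact_mod_cast hqpos
  have heq2 : (d1E u - d1E v) + (d2E u - d2E v) * r + (d3E u - d3E v) * r^2 = 0 := by
    have h0 : r * ((d1E u - d1E v) + (d2E u - d2E v) * r + (d3E u - d3E v) * r^2) = 0 := by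
      ring_nf; ring_nf at heq; linarith [hlow]
    rcases mul_eq_zero.mp h0 with h'' | h''
    · omega
    · exact h''
  have habs : ∀ a b : ℤ, |a| ≤ q → |b| ≤ q → |a - b| < r := by
    intro a b ha hb
    rw [abs_le] at ha hb; rw [abs_lt]; omega
  obtain ⟨e1, e2, e3⟩ := digits3 r _ _ _ (by omega)
    (habs _ _ hbu.1 hbv.1) (habs _ _ hbu.2.1 hbv.2.1) heq2
  cases u <;> cases v <;>
    simp only [lowE, d1E, d2E, d3E, Elem.X.injEq, Elem.Y.injEq, Elem.Z.injEq, Elem.H.injEq,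
      Prod.ext_iff] at hlow e1 e2 e3 ⊢ <;> omega

lemma typE_lt (u : Elem) : typE u < 4 := by cases u <;> simp [typE]

lemma quad_structure (q : ℕ) (E : Finset (ℕ × ℕ × ℕ)) (hE : ValidE q E)
    (Q : Finset Elem) (hcard : Q.card = 4) (hval : ∀ u ∈ Q, validElem q E u)
    (hsum : ∑ u ∈ Q, elemVal q u = 0) :
    ∃ i j k : ℕ, (i, j, k) ∈ E ∧ Elem.X i ∈ Q ∧ Elem.Y j ∈ Q ∧ Elem.Z k ∈ Q ∧
      Elem.H (i, j, k) ∈ Q ∧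
      (∀ u ∈ Q, (∀ i', u = .X i' → i' = i) ∧ (∀ j', u = .Y j' → j' = j) ∧
        (∀ k', u = .Z k' → k' = k) ∧ (∀ h', u = .H h' → h' = (i, j, k))) := by
  classical
  set r := (rho q : ℤ) with hrdef
  have hr : (29:ℤ) ≤ r := rho29 q
  have h3q : 3 * (q:ℤ) ≤ r := rho3q q
  -- fiberwise counts
  have hmaps : ∀ u ∈ Q, typE u ∈ Finset.range 4 := fun u _ => Finset.mem_range.mpr (typE_lt u)
  have hcnt : Q.card = ∑ v ∈ Finset.range 4, (Q.filter (fun u => typE u = v)).card :=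
    Finset.card_eq_sum_card_fiberwise hmaps
  set c0 := (Q.filter (fun u => typE u = 0)).card with hc0
  set c1 := (Q.filter (fun u => typE u = 1)).card with hc1
  set c2 := (Q.filter (fun u => typE u = 2)).card with hc2
  set c3 := (Q.filter (fun u => typE u = 3)).card with hc3
  have hcnt4 : c0 + c1 + c2 + c3 = 4 := by
    rw [hcard] at hcnt
    rw [Finset.sum_range_succ, Finset.sum_range_succ, Finset.sum_range_succ,
      Finset.sum_range_succ, Finset.sum_range_zero] at hcnt
    omega
  -- sum of lows
  have hlowsum : ∑ u ∈ Q, lowE u = (c0:ℤ) + 2*c1 + 4*c2 - 7*c3 := by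
    rw [← Finset.sum_fiberwise_of_maps_to hmaps (f := lowE)]
    rw [Finset.sum_range_succ, Finset.sum_range_succ, Finset.sum_range_succ,
      Finset.sum_range_succ, Finset.sum_range_zero]
    have e0 : ∑ u ∈ Q.filter (fun u => typE u = 0), lowE u = (c0:ℤ) := by
      rw [Finset.sum_congr rfl (fun u hu => ?_), Finset.sum_const, hc0, nsmul_eq_mul, mul_one]
      have := (Finset.mem_filter.mp hu).2
      cases u <;> simp [typE] at this ⊢ <;> simp [lowE]
    have e1 : ∑ u ∈ Q.filter (fun u => typE u = 1), lowE u = 2*(c1:ℤ) := by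
      rw [Finset.sum_congr rfl (fun u hu => ?_) (g := fun _ => (2:ℤ)), Finset.sum_const, hc1,
        nsmul_eq_mul, mul_comm]
      have := (Finset.mem_filter.mp hu).2
      cases u <;> simp [typE] at this ⊢ <;> simp [lowE]
    have e2 : ∑ u ∈ Q.filter (fun u => typE u = 2), lowE u = 4*(c2:ℤ) := by
      rw [Finset.sum_congr rfl (fun u hu => ?_) (g := fun _ => (4:ℤ)), Finset.sum_const, hc2,
        nsmul_eq_mul, mul_comm]
      have := (Finset.mem_filter.mp hu).2
      cases u <;> simp [typE] at this ⊢ <;> simp [lowE]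
    have e3 : ∑ u ∈ Q.filter (fun u => typE u = 3), lowE u = -7*(c3:ℤ) := by
      rw [Finset.sum_congr rfl (fun u hu => ?_) (g := fun _ => (-7:ℤ)), Finset.sum_const, hc3,
        nsmul_eq_mul, mul_comm]
      have := (Finset.mem_filter.mp hu).2
      cases u <;> simp [typE] at this ⊢ <;> simp [lowE]
    rw [e0, e1, e2, e3]; ring
  -- decompose the value sum
  have hdec : ∑ u ∈ Q, elemVal q u =
      (∑ u ∈ Q, lowE u) + (∑ u ∈ Q, d1E u) * r + (∑ u ∈ Q, d2E u) * r^2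
        + (∑ u ∈ Q, d3E u) * r^3 := by
    rw [Finset.sum_congr rfl (fun u _ => elemVal_decomp q u), Finset.sum_add_distrib,
      Finset.sum_add_distrib, Finset.sum_add_distrib, Finset.sum_mul, Finset.sum_mul,
      Finset.sum_mul]
  rw [hsum] at hdec
  -- low sum is zero
  have hLdvd : r ∣ (∑ u ∈ Q, lowE u) :=
    ⟨-((∑ u ∈ Q, d1E u) + (∑ u ∈ Q, d2E u) * r + (∑ u ∈ Q, d3E u) * r^2), by
      ring_nf; ring_nf at hdec; linarith⟩
  have hLbd : |∑ u ∈ Q, lowE u| < r := by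
    have hub : ∑ u ∈ Q, lowE u ≤ ∑ u ∈ Q, (4:ℤ) :=
      Finset.sum_le_sum (fun u _ => by cases u <;> simp [lowE])
    have hlb : ∑ u ∈ Q, (-7:ℤ) ≤ ∑ u ∈ Q, lowE u :=
      Finset.sum_le_sum (fun u _ => by cases u <;> simp [lowE])
    rw [Finset.sum_const, hcard] at hub hlb
    rw [abs_lt]; constructor <;> [linarith; linarith]
  have hL0 : ∑ u ∈ Q, lowE u = 0 := Int.eq_zero_of_abs_lt_dvd hLdvd hLbd
  rw [hL0] at hlowsum
  have hones : c0 = 1 ∧ c1 = 1 ∧ c2 = 1 ∧ c3 = 1 := by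
    have h1 : (c0:ℤ) + 2*c1 + 4*c2 - 7*c3 = 0 := hlowsum.symm
    have h2 : c0 + c1 + c2 + c3 = 4 := hcnt4
    clear_value c0 c1 c2 c3
    have h3 : c3 ≤ 4 := by omega
    interval_cases c3 <;> omega
  obtain ⟨ux, hux⟩ := Finset.card_eq_one.mp (hc0 ▸ hones.1)
  obtain ⟨uy, huy⟩ := Finset.card_eq_one.mp (hc1 ▸ hones.2.1)
  obtain ⟨uz, huz⟩ := Finset.card_eq_one.mp (hc2 ▸ hones.2.2.1)
  obtain ⟨uh, huh⟩ := Finset.card_eq_one.mp (hc3 ▸ hones.2.2.2)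
  have hmx : ux ∈ Q ∧ typE ux = 0 := by
    have : ux ∈ Q.filter (fun u => typE u = 0) := hux ▸ Finset.mem_singleton_self ux
    exact Finset.mem_filter.mp this
  have hmy : uy ∈ Q ∧ typE uy = 1 := by
    have : uy ∈ Q.filter (fun u => typE u = 1) := huy ▸ Finset.mem_singleton_self uy
    exact Finset.mem_filter.mp this
  have hmz : uz ∈ Q ∧ typE uz = 2 := by
    have : uz ∈ Q.filter (fun u => typE u = 2) := huz ▸ Finset.mem_singleton_self uz
    exact Finset.mem_filter.mp this
  have hmh : uh ∈ Q ∧ typE uh = 3 := by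
    have : uh ∈ Q.filter (fun u => typE u = 3) := huh ▸ Finset.mem_singleton_self uh
    exact Finset.mem_filter.mp this
  obtain ⟨i, rfl⟩ : ∃ i, ux = Elem.X i := by
    cases ux <;> simp [typE] at hmx ⊢
  obtain ⟨j, rfl⟩ : ∃ j, uy = Elem.Y j := by
    cases uy <;> simp [typE] at hmy ⊢
  obtain ⟨k, rfl⟩ : ∃ k, uz = Elem.Z k := by
    cases uz <;> simp [typE] at hmz ⊢
  obtain ⟨h, rfl⟩ : ∃ h, uh = Elem.H h := by
    cases uh <;> simp [typE] at hmh ⊢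
  -- Q is exactly these four
  have hsub : ({Elem.X i, Elem.Y j, Elem.Z k, Elem.H h} : Finset Elem) ⊆ Q := by
    intro u hu
    simp only [Finset.mem_insert, Finset.mem_singleton] at hu
    rcases hu with rfl | rfl | rfl | rfl
    exacts [hmx.1, hmy.1, hmz.1, hmh.1]
  have hc4 : ({Elem.X i, Elem.Y j, Elem.Z k, Elem.H h} : Finset Elem).card = 4 := by
    rw [Finset.card_insert_of_notMem (by simp), Finset.card_insert_of_notMem (by simp),
      Finset.card_insert_of_notMem (by simp), Finset.card_singleton]
  have hQeq : Q = ({Elem.X i, Elem.Y j, Elem.Z k, Elem.H h} : Finset Elem) :=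
    (Finset.eq_of_subset_of_card_le hsub (by rw [hcard, hc4])).symm
  -- expand the value sum
  have hsum2 : elemVal q (Elem.X i) + elemVal q (Elem.Y j) + elemVal q (Elem.Z k)
      + elemVal q (Elem.H h) = 0 := by
    rw [hQeq] at hsum
    rw [Finset.sum_insert (by simp), Finset.sum_insert (by simp), Finset.sum_insert (by simp),
      Finset.sum_singleton] at hsum
    linarith
  have hkey : r * (((i:ℤ) - h.1) + ((j:ℤ) - h.2.1) * r + ((k:ℤ) - h.2.2) * r^2) = 0 := by
    simp only [elemVal, xnum, ynum, znum, hnum, ← hrdef] at hsum2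
    ring_nf; ring_nf at hsum2; linarith
  have hinner : ((i:ℤ) - h.1) + ((j:ℤ) - h.2.1) * r + ((k:ℤ) - h.2.2) * r^2 = 0 := by
    rcases mul_eq_zero.mp hkey with h'' | h''
    · omega
    · exact h''
  have hiq : i ∈ Finset.Icc 1 q := hval _ hmx.1
  have hjq : j ∈ Finset.Icc 1 q := hval _ hmy.1
  have hkq : k ∈ Finset.Icc 1 q := hval _ hmz.1
  have hhE : h ∈ E := hval _ hmh.1
  obtain ⟨hh1, hh2, hh3⟩ := hE h hhE
  simp only [Finset.mem_Icc] at hiq hjq hkq hh1 hh2 hh3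
  have bd : ∀ a b : ℕ, 1 ≤ a → a ≤ q → 1 ≤ b → b ≤ q → |(a:ℤ) - b| < r := by
    intro a b ha1 ha2 hb1 hb2
    have ha : (a:ℤ) ≤ q := by exact_mod_cast ha2
    have hb : (b:ℤ) ≤ q := by exact_mod_cast hb2
    have ha' : (1:ℤ) ≤ a := by exact_mod_cast ha1
    have hb' : (1:ℤ) ≤ b := by exact_mod_cast hb1
    rw [abs_lt]; omega
  obtain ⟨e1, e2, e3⟩ := digits3 r _ _ _ (by omega)
    (bd i h.1 hiq.1 hiq.2 hh1.1 hh1.2) (bd j h.2.1 hjq.1 hjq.2 hh2.1 hh2.2) hinner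
  have hheq : h = (i, j, k) := by
    obtain ⟨a, b, c⟩ := h
    simp only [Prod.mk.injEq]
    simp only at e1 e2 e3
    refine ⟨by omega, by omega, by omega⟩
  subst hheq
  refine ⟨i, j, k, hhE, hmx.1, hmy.1, hmz.1, hmh.1, ?_⟩
  intro u hu
  refine ⟨?_, ?_, ?_, ?_⟩
  · rintro i' rfl
    have : Elem.X i' ∈ Q.filter (fun u => typE u = 0) := Finset.mem_filter.mpr ⟨hu, rfl⟩
    rw [hux, Finset.mem_singleton] at this
    exact (Elem.X.injEq _ _ ▸ this)
  · rintro j' rfl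
    have : Elem.Y j' ∈ Q.filter (fun u => typE u = 1) := Finset.mem_filter.mpr ⟨hu, rfl⟩
    rw [huy, Finset.mem_singleton] at this
    exact (Elem.Y.injEq _ _ ▸ this)
  · rintro k' rfl
    have : Elem.Z k' ∈ Q.filter (fun u => typE u = 2) := Finset.mem_filter.mpr ⟨hu, rfl⟩
    rw [huz, Finset.mem_singleton] at this
    exact (Elem.Z.injEq _ _ ▸ this)
  · rintro h' rfl
    have : Elem.H h' ∈ Q.filter (fun u => typE u = 3) := Finset.mem_filter.mpr ⟨hu, rfl⟩
    rw [huh, Finset.mem_singleton] at this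
    exact (Elem.H.injEq _ _ ▸ this)


-- AUX part 2
lemma mem_QK (q : ℕ) (E : Finset (ℕ × ℕ × ℕ)) (u : Elem) (hu : validElem q E u) :
    elemVal q u ∈ QK q E := by
  cases u with
  | X i => exact Finset.mem_union_left _ (Finset.mem_union_left _ (Finset.mem_union_left _
      (Finset.mem_image_of_mem _ hu)))
  | Y j => exact Finset.mem_union_left _ (Finset.mem_union_left _ (Finset.mem_union_right _
      (Finset.mem_image_of_mem _ hu)))
  | Z k => exact Finset.mem_union_left _ (Finset.mem_union_right _
      (Finset.mem_image_of_mem _ hu))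
  | H h => exact Finset.mem_union_right _ (Finset.mem_image_of_mem _ hu)

lemma val_le_mu (q : ℕ) (E : Finset (ℕ × ℕ × ℕ)) (u : Elem) (hu : validElem q E u) :
    10 * |elemVal q u| ≤ (mu q E : ℤ) - 1 := by
  have h1 : 10 * (elemVal q u).natAbs ≤ (QK q E).sup (fun v => 10 * v.natAbs) :=
    Finset.le_sup (f := fun v => 10 * v.natAbs) (mem_QK q E u hu)
  have h2 : 10 * (elemVal q u).natAbs + 1 ≤ mu q E := by rw [mu]; omega
  have := (Int.ofNat_le.mpr h2)
  push_cast at this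
  rw [Int.abs_eq_natAbs]
  push_cast
  linarith

lemma mu_pos (q : ℕ) (E : Finset (ℕ × ℕ × ℕ)) : (1:ℤ) ≤ (mu q E : ℤ) := by
  have : 1 ≤ mu q E := by rw [mu]; omega
  exact_mod_cast this

lemma Aval_cast (q : ℕ) (E : Finset (ℕ × ℕ × ℕ)) :
    (Aval q E : ℤ) = 5 * (mu q E : ℤ) + 4 := by rw [Aval]; push_cast; ring

def nuT (q : ℕ) (t : UTask) : ℤ := if t.2 then elemVal q t.1 else -elemVal q t.1
def cT (t : UTask) : ℤ := if t.2 then 1 else 0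

lemma dem_eq (q : ℕ) (E : Finset (ℕ × ℕ × ℕ)) (t : UTask) :
    taskDem q E t = (Aval q E : ℤ) + 10 * nuT q t + cT t := by
  rw [taskDem, nuT, cT]; split_ifs <;> ring

lemma len_eq (q : ℕ) (E : Finset (ℕ × ℕ × ℕ)) (t : UTask) :
    taskLen q E t = (Aval q E : ℤ) - 10 * nuT q t := by
  rw [taskLen, nuT]; split_ifs <;> ring

lemma nu_bd (q : ℕ) (E : Finset (ℕ × ℕ × ℕ)) (t : UTask) (hu : validElem q E t.1) :
    10 * |nuT q t| ≤ (mu q E : ℤ) - 1 := by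
  have := val_le_mu q E t.1 hu
  rw [nuT]; split_ifs <;> simp [abs_neg] <;> linarith

lemma cT_cases (t : UTask) : cT t = 0 ∨ cT t = 1 := by rw [cT]; split_ifs <;> simp

lemma dem_pos (q : ℕ) (E : Finset (ℕ × ℕ × ℕ)) (t : UTask) (hu : validElem q E t.1) :
    4 * (mu q E : ℤ) + 5 ≤ taskDem q E t := by
  have h1 := nu_bd q E t hu
  have h2 := abs_le.mp (le_of_eq (rfl : |nuT q t| = |nuT q t|))
  have h3 : -((mu q E : ℤ) - 1) ≤ 10 * nuT q t ∧ 10 * nuT q t ≤ (mu q E : ℤ) - 1 := by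
    have := abs_le.mp (show |10 * nuT q t| ≤ (mu q E:ℤ) - 1 by rw [abs_mul]; simpa using h1)
    exact this
  rcases cT_cases t with h | h <;> rw [dem_eq, h, Aval_cast] <;> linarith

lemma len_lb (q : ℕ) (E : Finset (ℕ × ℕ × ℕ)) (t : UTask) (hu : validElem q E t.1) :
    4 * (mu q E : ℤ) + 5 ≤ taskLen q E t := by
  have h1 := nu_bd q E t hu
  have h3 : 10 * nuT q t ≤ (mu q E : ℤ) - 1 := by
    have := abs_le.mp (show |10 * nuT q t| ≤ (mu q E:ℤ) - 1 by rw [abs_mul]; simpa using h1)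
    exact this.2
  rw [len_eq, Aval_cast]; linarith

lemma len_ub (q : ℕ) (E : Finset (ℕ × ℕ × ℕ)) (t : UTask) (hu : validElem q E t.1) :
    taskLen q E t ≤ (Aval q E : ℤ) + (mu q E : ℤ) - 1 := by
  have h1 := nu_bd q E t hu
  have h3 : -((mu q E:ℤ) - 1) ≤ 10 * nuT q t := by
    have := abs_le.mp (show |10 * nuT q t| ≤ (mu q E:ℤ) - 1 by rw [abs_mul]; simpa using h1)
    exact this.1
  rw [len_eq]; linarith

lemma dem_ub (q : ℕ) (E : Finset (ℕ × ℕ × ℕ)) (t : UTask) (hu : validElem q E t.1) :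
    taskDem q E t ≤ (Aval q E : ℤ) + (mu q E : ℤ) := by
  have h1 := nu_bd q E t hu
  have h3 : 10 * nuT q t ≤ (mu q E:ℤ) - 1 := by
    have := abs_le.mp (show |10 * nuT q t| ≤ (mu q E:ℤ) - 1 by rw [abs_mul]; simpa using h1)
    exact this.2
  rcases cT_cases t with h | h <;> rw [dem_eq, h] <;> linarith

lemma block_disjoint (q : ℕ) (E : Finset (ℕ × ℕ × ℕ)) (b b' : ℕ) (hne : b ≠ b') :
    Disjoint (block q E b) (block q E b') := by
  rw [Finset.disjoint_left]
  intro e he1 he2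
  rw [block, Finset.mem_Ico, blockStart] at he1 he2
  set A := (Aval q E : ℤ)
  have hA : 0 ≤ A := Int.ofNat_nonneg _
  rcases lt_or_gt_of_ne hne with h | h
  · have hc : ((b:ℤ)+1) ≤ (b':ℤ) := by exact_mod_cast h
    nlinarith [he1.2, he2.1]
  · have hc : ((b':ℤ)+1) ≤ (b:ℤ) := by exact_mod_cast h
    nlinarith [he2.2, he1.1]

lemma sched_nonempty (q : ℕ) (E : Finset (ℕ × ℕ × ℕ)) (start : UTask → ℤ) (t : UTask)
    (hu : validElem q E t.1) : (sched q E start t).Nonempty := by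
  rw [sched]
  apply Finset.nonempty_Ico.mpr
  have := len_lb q E t hu
  have := mu_pos q E
  linarith

lemma task_in_block (q : ℕ) (E : Finset (ℕ × ℕ × ℕ)) (S : Finset UTask) (start : UTask → ℤ)
    (hfeas : Feasible q E S start) (t : UTask) (ht : t ∈ S) :
    ∃ b : ℕ, b < q ∧ sched q E start t ⊆ block q E b := by
  obtain ⟨hval, hrange, hcap⟩ := hfeas
  have hv := hval t ht
  obtain ⟨hs0, hsN⟩ := hrange t ht
  set A := (Aval q E : ℤ) with hA
  have hA0 : 0 ≤ A := Int.ofNat_nonneg _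
  have hL : 0 < taskLen q E t := by
    have := len_lb q E t hv; have := mu_pos q E; linarith
  set s := start t with hs
  have hW : 0 < 2*A+1 := by linarith
  set d := s / (2*A+1) with hd
  set r := s % (2*A+1) with hr
  have hdr : (2*A+1) * d + r = s := Int.mul_ediv_add_emod s (2*A+1)
  have hr0 : 0 ≤ r := Int.emod_nonneg s (by linarith)
  have hrlt : r < 2*A+1 := Int.emod_lt_of_pos s hW
  have hd0 : 0 ≤ d := Int.ediv_nonneg hs0 (by linarith)
  -- b := d.toNat
  have hsq : s < (2*A+1) * q := by
    have : s + taskLen q E t ≤ (2*A+1) * q - 1 := hsN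
    linarith
  have hdq : d < (q:ℤ) := by
    by_contra hcon
    push_neg at hcon
    have : (2*A+1) * (q:ℤ) ≤ (2*A+1) * d := by
      apply mul_le_mul_of_nonneg_left hcon (by linarith)
    linarith
  refine ⟨d.toNat, ?_, ?_⟩
  · have : (d.toNat : ℤ) = d := Int.toNat_of_nonneg hd0
    omega
  -- sched ⊆ block
  have hbS : blockStart q E d.toNat = (2*A+1) * d := by
    rw [blockStart, Int.toNat_of_nonneg hd0, ← hA]; ring
  have hend : s + taskLen q E t ≤ (2*A+1) * d + 2*A := by
    by_contra hcon
    push_neg at hcon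
    set sep := (2*A+1) * d + 2*A with hsep
    have hsle : s ≤ sep := by linarith
    rcases lt_or_ge sep (numEdges q E) with hlt | hge
    · have hload := hcap sep (by linarith) hlt
      have hcapv : cap q E sep = 0 := by
        rw [cap]
        have hmod : sep % (2*A+1) = 2*A := by
          rw [show sep = 2*A + (2*A+1)*d by rw [hsep]; ring, Int.add_mul_emod_self_left]
          exact Int.emod_eq_of_lt (by linarith) (by linarith)
        simp only [← hA, hmod]
        rw [if_neg (by linarith), if_neg (by linarith)]
      rw [hcapv] at hload
      have htin : t ∈ S.filter (fun t' => sep ∈ sched q E start t') := by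
        rw [Finset.mem_filter]
        exact ⟨ht, by rw [sched, Finset.mem_Ico]; exact ⟨hsle, hcon⟩⟩
      have hpos : ∀ t' ∈ S.filter (fun t' => sep ∈ sched q E start t'), 0 ≤ taskDem q E t' := by
        intro t' ht'
        have := dem_pos q E t' (hval t' (Finset.mem_filter.mp ht').1)
        have := mu_pos q E
        linarith
      have := Finset.single_le_sum hpos htin
      have hdp := dem_pos q E t hv
      have := mu_pos q E
      linarith
    · rw [numEdges, ← hA] at hge hsN
      linarith
  intro e he
  rw [sched, Finset.mem_Ico] at he
  rw [block, Finset.mem_Ico, hbS]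
  constructor
  · linarith [he.1]
  · linarith [he.2]

lemma block_unique (q : ℕ) (E : Finset (ℕ × ℕ × ℕ)) (start : UTask → ℤ) (t : UTask)
    (hv : validElem q E t.1) (b b' : ℕ) (h1 : sched q E start t ⊆ block q E b)
    (h2 : sched q E start t ⊆ block q E b') : b = b' := by
  by_contra hne
  obtain ⟨e, he⟩ := sched_nonempty q E start t hv
  exact (Finset.disjoint_left.mp (block_disjoint q E b b' hne) (h1 he)) (h2 he)

lemma block_edge_cap (q : ℕ) (E : Finset (ℕ × ℕ × ℕ)) (b : ℕ) (hb : b < q) (e : ℤ)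
    (he : e ∈ block q E b) :
    0 ≤ e ∧ e < numEdges q E ∧
      cap q E e = (if e < blockStart q E b + (Aval q E : ℤ) then 4*(Aval q E:ℤ)+4
        else 4*(Aval q E:ℤ)) := by
  set A := (Aval q E : ℤ) with hA
  have hA0 : 0 ≤ A := Int.ofNat_nonneg _
  rw [block, Finset.mem_Ico, blockStart] at he
  have hbq : (b:ℤ) + 1 ≤ (q:ℤ) := by exact_mod_cast hb
  have h0e : 0 ≤ e := le_trans (by positivity) he.1
  have heN : e < numEdges q E := by
    have hmul : ((b:ℤ)+1) * (2*A+1) ≤ (q:ℤ) * (2*A+1) :=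
      mul_le_mul_of_nonneg_right hbq (by linarith)
    rw [numEdges, ← hA]; nlinarith [he.2, hmul]
  refine ⟨h0e, heN, ?_⟩
  have h1 : 0 ≤ e - (b:ℤ)*(2*A+1) := by linarith [he.1]
  have h2 : e - (b:ℤ)*(2*A+1) < 2*A+1 := by linarith [he.2]
  have hmod : e % (2*A+1) = e - (b:ℤ)*(2*A+1) := by
    conv_lhs => rw [show e = (e - (b:ℤ)*(2*A+1)) + (2*A+1)*(b:ℤ) by ring]
    rw [Int.add_mul_emod_self_left]
    exact Int.emod_eq_of_lt h1 h2
  show (if e % (2*A+1) < A then 4*A+4 else if e % (2*A+1) < 2*A then 4*A else 0) = _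
  rw [hmod, blockStart, ← hA]
  by_cases hcase : e < (b:ℤ)*(2*A+1) + A
  · rw [if_pos (by linarith), if_pos hcase]
  · rw [if_neg (by omega), if_pos (by linarith [he.2]), if_neg hcase]

lemma load_in_block (q : ℕ) (E : Finset (ℕ × ℕ × ℕ)) (S : Finset UTask) (start : UTask → ℤ)
    (hfeas : Feasible q E S start) (b : ℕ) (hb : b < q) (e : ℤ) (he : e ∈ block q E b) :
    ∑ t ∈ (S.filter (fun t => sched q E start t ⊆ block q E b)).filter
        (fun t => e ∈ sched q E start t), taskDem q E t
      ≤ (if e < blockStart q E b + (Aval q E : ℤ) then 4*(Aval q E:ℤ)+4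
        else 4*(Aval q E:ℤ)) := by
  obtain ⟨h0e, heN, hcap⟩ := block_edge_cap q E b hb e he
  have hfe := hfeas.2.2 e h0e heN
  rw [hcap] at hfe
  have hfilter : S.filter (fun t => e ∈ sched q E start t) =
      (S.filter (fun t => sched q E start t ⊆ block q E b)).filter
        (fun t => e ∈ sched q E start t) := by
    rw [Finset.filter_filter]
    ext t
    simp only [Finset.mem_filter]
    constructor
    · rintro ⟨htS, hte⟩
      obtain ⟨b', hb', hsub'⟩ := task_in_block q E S start hfeas t htS
      have hbb : b' = b := by
        by_contra hne
        exact (Finset.disjoint_left.mp (block_disjoint q E b' b hne) (hsub' hte)) he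
      exact ⟨htS, hbb ▸ hsub', hte⟩
    · rintro ⟨htS, _, hte⟩
      exact ⟨htS, hte⟩
  rw [← hfilter]
  exact hfe

lemma count_le_four (q : ℕ) (E : Finset (ℕ × ℕ × ℕ)) (S : Finset UTask) (start : UTask → ℤ)
    (hfeas : Feasible q E S start) (b : ℕ) (hb : b < q) (e : ℤ) (he : e ∈ block q E b) :
    ((S.filter (fun t => sched q E start t ⊆ block q E b)).filter
      (fun t => e ∈ sched q E start t)).card ≤ 4 := by
  set m := (mu q E : ℤ) with hm
  have hm1 : 1 ≤ m := mu_pos q E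
  have hAm : (Aval q E : ℤ) = 5*m+4 := Aval_cast q E
  set F := (S.filter (fun t => sched q E start t ⊆ block q E b)).filter
      (fun t => e ∈ sched q E start t) with hF
  have hload := load_in_block q E S start hfeas b hb e he
  have hub : ∑ t ∈ F, taskDem q E t ≤ 4*(Aval q E:ℤ)+4 := by
    refine le_trans hload ?_
    split_ifs <;> linarith
  have hlb : ∀ t ∈ F, 4*m+5 ≤ taskDem q E t := by
    intro t ht
    have htS : t ∈ S := Finset.mem_filter.mp (Finset.mem_filter.mp ht).1 |>.1
    exact dem_pos q E t (hfeas.1 t htS)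
  have hsum := Finset.card_nsmul_le_sum F _ _ hlb
  rw [nsmul_eq_mul] at hsum
  by_contra hcon
  push_neg at hcon
  have h5 : (5:ℤ) ≤ (F.card : ℤ) := by exact_mod_cast hcon
  nlinarith [hsum, hub]

lemma block_structure (q : ℕ) (E : Finset (ℕ × ℕ × ℕ)) (hE : ValidE q E)
    (S : Finset UTask) (start : UTask → ℤ) (hfeas : Feasible q E S start)
    (b : ℕ) (hb : b < q)
    (h8 : (S.filter (fun t => sched q E start t ⊆ block q E b)).card = 8) :
    ∃ i j k : ℕ,
      (i, j, k) ∈ E ∧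
      ((Elem.H (i,j,k), true) ∈ S ∧ sched q E start (Elem.H (i,j,k), true) ⊆ block q E b) ∧
      ((Elem.H (i,j,k), false) ∈ S ∧ sched q E start (Elem.H (i,j,k), false) ⊆ block q E b) ∧
      ((Elem.X i, true) ∈ S ∧ sched q E start (Elem.X i, true) ⊆ block q E b) ∧
      ((Elem.Y j, true) ∈ S ∧ sched q E start (Elem.Y j, true) ⊆ block q E b) ∧
      ((Elem.Z k, true) ∈ S ∧ sched q E start (Elem.Z k, true) ⊆ block q E b) ∧
      (∀ h' : ℕ × ℕ × ℕ, (Elem.H h', true) ∈ S →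
        sched q E start (Elem.H h', true) ⊆ block q E b → h' = (i,j,k)) := by
  classical
  set A := (Aval q E : ℤ) with hA
  set m := (mu q E : ℤ) with hm
  have hm1 : 1 ≤ m := mu_pos q E
  have hAm : A = 5*m + 4 := Aval_cast q E
  set B := blockStart q E b with hB
  have hB0 : 0 ≤ B := by
    rw [hB, blockStart]
    have : (0:ℤ) ≤ (b:ℤ) := Int.ofNat_nonneg _
    have : (0:ℤ) ≤ (Aval q E : ℤ) := Int.ofNat_nonneg _
    positivity
  set Sb := S.filter (fun t => sched q E start t ⊆ block q E b) with hSbdef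
  have hblock : block q E b = Finset.Ico B (B + 2*A) := by rw [block, hB, hA]
  have hSbS : ∀ t ∈ Sb, t ∈ S := fun t ht => (Finset.mem_filter.mp ht).1
  have hSbsub : ∀ t ∈ Sb, sched q E start t ⊆ block q E b :=
    fun t ht => (Finset.mem_filter.mp ht).2
  have hval : ∀ t ∈ Sb, validElem q E t.1 := fun t ht => hfeas.1 t (hSbS t ht)
  have hlenlb : ∀ t ∈ Sb, 4*m + 5 ≤ taskLen q E t := by
    intro t ht; have := len_lb q E t (hval t ht); rw [← hm] at this; exact this
  have hlenub : ∀ t ∈ Sb, taskLen q E t ≤ A + m - 1 := by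
    intro t ht; have := len_ub q E t (hval t ht); rw [← hm, ← hA] at this; linarith
  have hpos : ∀ t ∈ Sb, B ≤ start t ∧ start t + taskLen q E t ≤ B + 2*A := by
    intro t ht
    have hsub := hSbsub t ht
    rw [hblock, sched] at hsub
    have hlt : start t < start t + taskLen q E t := by linarith [hlenlb t ht]
    exact (Finset.Ico_subset_Ico_iff hlt).mp hsub
  have hcnt4 : ∀ e ∈ block q E b,
      ((Sb.filter (fun t => e ∈ sched q E start t)).card) ≤ 4 := by
    intro e he; exact count_le_four q E S start hfeas b hb e he
  have hloadB : ∀ e ∈ block q E b,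
      ∑ t ∈ Sb.filter (fun t => e ∈ sched q E start t), taskDem q E t ≤
        (if e < B + A then 4*A+4 else 4*A) := by
    intro e he
    have := load_in_block q E S start hfeas b hb e he
    rw [← hSbdef, ← hA, ← hB] at this
    exact this
  -- the two key edges
  set e0 := B + (A - m) with he0def
  set e1 := B + (A + m - 1) with he1def
  have he0 : e0 ∈ block q E b := by
    rw [hblock, Finset.mem_Ico]; constructor <;> [linarith; linarith]
  have he1 : e1 ∈ block q E b := by
    rw [hblock, Finset.mem_Ico]; constructor <;> [linarith; linarith]
  set P := Sb.filter (fun t => e0 ∈ sched q E start t) with hPdef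
  set R := Sb.filter (fun t => e1 ∈ sched q E start t) with hRdef
  have hPsub : P ⊆ Sb := Finset.filter_subset _ _
  have hRsub : R ⊆ Sb := Finset.filter_subset _ _
  have hPR : ∀ t ∈ Sb, t ∈ P ∨ t ∈ R := by
    intro t ht
    obtain ⟨hp1, hp2⟩ := hpos t ht
    have hl1 := hlenlb t ht
    have hl2 := hlenub t ht
    by_cases hc : start t ≤ e0
    · left
      rw [hPdef, Finset.mem_filter]
      exact ⟨ht, by rw [sched, Finset.mem_Ico]; exact ⟨hc, by linarith⟩⟩
    · right
      push_neg at hc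
      rw [hRdef, Finset.mem_filter]
      refine ⟨ht, ?_⟩
      rw [sched, Finset.mem_Ico]
      constructor
      · linarith
      · linarith
  have hP4 : P.card ≤ 4 := hcnt4 e0 he0
  have hR4 : R.card ≤ 4 := hcnt4 e1 he1
  have hunion : P ∪ R = Sb := by
    apply Finset.Subset.antisymm (Finset.union_subset hPsub hRsub)
    intro t ht
    rcases hPR t ht with h | h
    · exact Finset.mem_union_left _ h
    · exact Finset.mem_union_right _ h
  have hcui := Finset.card_union_add_card_inter P R
  rw [hunion, h8] at hcui
  have hPcard : P.card = 4 := by omega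
  have hRcard : R.card = 4 := by omega
  have hinter : P ∩ R = ∅ := Finset.card_eq_zero.mp (by omega)
  have hdisjPR : Disjoint P R := Finset.disjoint_iff_inter_eq_empty.mpr hinter
  have hPnotR : ∀ t ∈ P, t ∉ R := fun t htp htr =>
    Finset.notMem_empty t (hinter ▸ Finset.mem_inter.mpr ⟨htp, htr⟩)
  have hRnotP : ∀ t ∈ R, t ∉ P := fun t htr htp =>
    Finset.notMem_empty t (hinter ▸ Finset.mem_inter.mpr ⟨htp, htr⟩)
  have hPfacts : ∀ t ∈ P, start t ≤ e0 ∧ start t + taskLen q E t ≤ e1 := by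
    intro t ht
    have h1 : e0 ∈ sched q E start t := (Finset.mem_filter.mp ht).2
    rw [sched, Finset.mem_Ico] at h1
    have h2 : ¬ (e1 ∈ sched q E start t) := by
      intro hcon
      exact hPnotR t ht (Finset.mem_filter.mpr ⟨hPsub ht, hcon⟩)
    rw [sched, Finset.mem_Ico] at h2
    push_neg at h2
    exact ⟨h1.1, h2 (by linarith [h1.1])⟩
  have hRfacts : ∀ t ∈ R, e0 + 1 ≤ start t := by
    intro t ht
    have h2 : ¬ (e0 ∈ sched q E start t) := by
      intro hcon
      exact hRnotP t ht (Finset.mem_filter.mpr ⟨hRsub ht, hcon⟩)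
    rw [sched, Finset.mem_Ico] at h2
    push_neg at h2
    by_contra hcon
    push_neg at hcon
    have := h2 (by linarith)
    have := hlenlb t (hRsub ht)
    have := (hpos t (hRsub ht)).1
    linarith
  -- demand sums over P and R
  have hdemP : ∑ t ∈ P, taskDem q E t ≤ 4*A + 4 := by
    have := hloadB e0 he0
    rw [← hPdef, if_pos (by linarith)] at this
    exact this
  have hdemR : ∑ t ∈ R, taskDem q E t ≤ 4*A := by
    have := hloadB e1 he1
    rw [← hRdef, if_neg (by linarith)] at this
    exact this
  set NP := ∑ t ∈ P, nuT q t with hNP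
  set NR := ∑ t ∈ R, nuT q t with hNR
  set aP := ∑ t ∈ P, cT t with haP
  set aR := ∑ t ∈ R, cT t with haR
  have hsumdem : ∀ (F : Finset UTask), F.card = 4 → ∑ t ∈ F, taskDem q E t
      = 4*A + 10 * (∑ t ∈ F, nuT q t) + (∑ t ∈ F, cT t) := by
    intro F hF
    rw [Finset.sum_congr rfl (fun t _ => dem_eq q E t), Finset.sum_add_distrib,
      Finset.sum_add_distrib, Finset.sum_const, hF, Finset.mul_sum, ← hA]
    push_cast
    ring
  have hineq1 : 10*NP + aP ≤ 4 := by
    have := hsumdem P hPcard; rw [← hNP, ← haP] at this; linarith [hdemP, this]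
  have hineq2 : 10*NR + aR ≤ 0 := by
    have := hsumdem R hRcard; rw [← hNR, ← haR] at this; linarith [hdemR, this]
  have haPpos : 0 ≤ aP := Finset.sum_nonneg (fun t _ => by rw [cT]; split_ifs <;> norm_num)
  have haRpos : 0 ≤ aR := Finset.sum_nonneg (fun t _ => by rw [cT]; split_ifs <;> norm_num)
  -- total length double counting
  have hcount_eq : ∀ t ∈ Sb, (∑ e ∈ block q E b, if e ∈ sched q E start t then (1:ℤ) else 0)
      = taskLen q E t := by
    intro t ht
    rw [Finset.sum_boole]
    have h1 : (block q E b).filter (fun e => e ∈ sched q E start t) = sched q E start t := by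
      rw [Finset.filter_mem_eq_inter]
      exact Finset.inter_eq_right.mpr (hSbsub t ht)
    rw [h1, sched, Int.card_Ico]
    have : 0 ≤ taskLen q E t := by linarith [hlenlb t ht]
    push_cast [Int.toNat_of_nonneg (show (0:ℤ) ≤ start t + taskLen q E t - start t by linarith)]
    ring
  have hlensum : ∑ t ∈ Sb, taskLen q E t =
      ∑ e ∈ block q E b, ((Sb.filter (fun t => e ∈ sched q E start t)).card : ℤ) := by
    rw [← Finset.sum_congr rfl hcount_eq, Finset.sum_comm]
    apply Finset.sum_congr rfl
    intro e _
    rw [Finset.sum_boole]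
  have hblockcard : ((block q E b).card : ℤ) = 2*A := by
    rw [hblock, Int.card_Ico]
    push_cast [Int.toNat_of_nonneg (show (0:ℤ) ≤ B + 2*A - B by linarith)]
    ring
  have hlen8 : ∑ t ∈ Sb, taskLen q E t ≤ 8*A := by
    rw [hlensum]
    calc ∑ e ∈ block q E b, ((Sb.filter (fun t => e ∈ sched q E start t)).card : ℤ)
        ≤ ∑ _e ∈ block q E b, (4:ℤ) := by
          apply Finset.sum_le_sum
          intro e he
          exact_mod_cast hcnt4 e he
      _ = 8*A := by rw [Finset.sum_const, nsmul_eq_mul]; linarith [hblockcard]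
  set N := ∑ t ∈ Sb, nuT q t with hN
  have hlen_formula : ∑ t ∈ Sb, taskLen q E t = 8*A - 10*N := by
    rw [Finset.sum_congr rfl (fun t _ => len_eq q E t), Finset.sum_sub_distrib,
      Finset.sum_const, h8, ← hA, ← Finset.mul_sum, ← hN]
    push_cast
    ring
  have hNsplit : N = NP + NR := by
    rw [hN, hNP, hNR, ← hunion, Finset.sum_union hdisjPR]
  have hNP0 : NP = 0 ∧ NR = 0 ∧ aR = 0 := by
    have hNpos : 0 ≤ N := by linarith [hlen8, hlen_formula]
    omega
  obtain ⟨hNP0, hNR0, haR0⟩ := hNP0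
  have hRfalse : ∀ t ∈ R, t.2 = false := by
    intro t ht
    have hz : cT t = 0 := by
      have hnn : ∀ t' ∈ R, 0 ≤ cT t' := fun t' _ => by rw [cT]; split_ifs <;> norm_num
      exact (Finset.sum_eq_zero_iff_of_nonneg hnn).mp haR0 t ht
    rw [cT] at hz
    rcases Bool.eq_false_or_eq_true t.2 with h | h
    · rw [h] at hz; simp at hz
    · exact h
  have hlen_exact : ∑ t ∈ Sb, taskLen q E t = 8*A := by
    rw [hlen_formula, hNsplit, hNP0, hNR0]; ring
  have hcov : ∀ e ∈ block q E b,
      ((Sb.filter (fun t => e ∈ sched q E start t)).card) = 4 := by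
    by_contra hcon
    push_neg at hcon
    obtain ⟨e', he', hne⟩ := hcon
    have hlt : ((Sb.filter (fun t => e' ∈ sched q E start t)).card : ℤ) < 4 := by
      have := hcnt4 e' he'
      have h2 : (Sb.filter (fun t => e' ∈ sched q E start t)).card < 4 := by omega
      exact_mod_cast h2
    have : ∑ e ∈ block q E b, ((Sb.filter (fun t => e ∈ sched q E start t)).card : ℤ)
        < ∑ _e ∈ block q E b, (4:ℤ) := by
      apply Finset.sum_lt_sum
      · intro e he; exact_mod_cast hcnt4 e he
      · exact ⟨e', he', hlt⟩
    rw [Finset.sum_const, nsmul_eq_mul] at this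
    rw [hlensum] at hlen_exact
    rw [hlen_exact] at this
    linarith [hblockcard]
  -- all P tasks start at B
  have hBin : B ∈ block q E b := by
    rw [hblock, Finset.mem_Ico]; constructor <;> [linarith; linarith]
  have hPstart : ∀ t ∈ P, start t = B := by
    have hFP : Sb.filter (fun t => B ∈ sched q E start t) ⊆ P := by
      intro t ht
      obtain ⟨htSb, htB⟩ := Finset.mem_filter.mp ht
      rw [sched, Finset.mem_Ico] at htB
      have hstB : start t = B := le_antisymm htB.1 (hpos t htSb).1
      rw [hPdef, Finset.mem_filter]
      refine ⟨htSb, ?_⟩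
      rw [sched, Finset.mem_Ico, hstB]
      constructor
      · linarith
      · linarith [hlenlb t htSb]
    have hcardB : (Sb.filter (fun t => B ∈ sched q E start t)).card = 4 := hcov B hBin
    have hFeq : Sb.filter (fun t => B ∈ sched q E start t) = P :=
      Finset.eq_of_subset_of_card_le hFP (by rw [hPcard, hcardB])
    intro t ht
    rw [← hFeq, Finset.mem_filter, sched, Finset.mem_Ico] at ht
    exact le_antisymm ht.2.1 (hpos t (hPsub (hFeq ▸ Finset.mem_filter.mpr ⟨ht.1, by
      rw [sched, Finset.mem_Ico]; exact ht.2⟩))).1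
  -- all R tasks end at B + 2A
  have hlastin : B + 2*A - 1 ∈ block q E b := by
    rw [hblock, Finset.mem_Ico]; constructor <;> [linarith; linarith]
  have hRend : ∀ t ∈ R, start t + taskLen q E t = B + 2*A := by
    have hFR : Sb.filter (fun t => B + 2*A - 1 ∈ sched q E start t) ⊆ R := by
      intro t ht
      obtain ⟨htSb, htB⟩ := Finset.mem_filter.mp ht
      rw [sched, Finset.mem_Ico] at htB
      have hendB : start t + taskLen q E t = B + 2*A :=
        le_antisymm (hpos t htSb).2 (by linarith [htB.2])
      rw [hRdef, Finset.mem_filter]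
      refine ⟨htSb, ?_⟩
      rw [sched, Finset.mem_Ico]
      constructor
      · linarith [hlenlb t htSb]
      · linarith
    have hcardL : (Sb.filter (fun t => B + 2*A - 1 ∈ sched q E start t)).card = 4 :=
      hcov _ hlastin
    have hFeq : Sb.filter (fun t => B + 2*A - 1 ∈ sched q E start t) = R :=
      Finset.eq_of_subset_of_card_le hFR (by rw [hRcard, hcardL])
    intro t ht
    rw [← hFeq, Finset.mem_filter, sched, Finset.mem_Ico] at ht
    refine le_antisymm ?_ (by linarith [ht.2.2])
    exact (hpos t (hRsub (hFeq ▸ Finset.mem_filter.mpr ⟨ht.1, by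
      rw [sched, Finset.mem_Ico]; exact ht.2⟩))).2
  -- pairing
  have hdecomp : ∀ y : ℤ, (Sb.filter (fun t => y ∈ sched q E start t)).card =
      (P.filter (fun t => y ∈ sched q E start t)).card +
      (R.filter (fun t => y ∈ sched q E start t)).card := by
    intro y
    rw [← hunion, Finset.filter_union]
    exact Finset.card_union_of_disjoint (Finset.disjoint_filter_filter hdisjPR)
  have hpair : ∀ t ∈ P, ∃ r ∈ R, taskLen q E t + taskLen q E r = 2*A := by
    intro p hp
    set x := taskLen q E p with hx
    have hx1 : 4*m+5 ≤ x := hlenlb p (hPsub hp)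
    have hx2 : x ≤ A + m - 1 := hlenub p (hPsub hp)
    have hu1 : B + x - 1 ∈ block q E b := by
      rw [hblock, Finset.mem_Ico]; constructor <;> [linarith; linarith]
    have hu2 : B + x ∈ block q E b := by
      rw [hblock, Finset.mem_Ico]; constructor <;> [linarith; linarith]
    have hPu : P.filter (fun t => B + x - 1 ∈ sched q E start t)
        = P.filter (fun t => x ≤ taskLen q E t) := by
      apply Finset.filter_congr
      intro t ht
      rw [sched, Finset.mem_Ico, hPstart t ht]
      constructor
      · intro hh; omega
      · intro hh; omega
    have hPu' : P.filter (fun t => B + x ∈ sched q E start t)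
        = P.filter (fun t => x + 1 ≤ taskLen q E t) := by
      apply Finset.filter_congr
      intro t ht
      rw [sched, Finset.mem_Ico, hPstart t ht]
      constructor
      · intro hh; omega
      · intro hh; omega
    have hRu : R.filter (fun t => B + x - 1 ∈ sched q E start t)
        = R.filter (fun t => start t ≤ B + x - 1) := by
      apply Finset.filter_congr
      intro t ht
      rw [sched, Finset.mem_Ico]
      have := hRend t ht
      constructor
      · intro hh; omega
      · intro hh
        exact ⟨hh, by omega⟩
    have hRu' : R.filter (fun t => B + x ∈ sched q E start t)
        = R.filter (fun t => start t ≤ B + x) := by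
      apply Finset.filter_congr
      intro t ht
      rw [sched, Finset.mem_Ico]
      have := hRend t ht
      constructor
      · intro hh; omega
      · intro hh
        exact ⟨hh, by omega⟩
    have hsplitP : (P.filter (fun t => x ≤ taskLen q E t)).card
        = (P.filter (fun t => x + 1 ≤ taskLen q E t)).card
          + (P.filter (fun t => taskLen q E t = x)).card := by
      rw [← Finset.card_union_of_disjoint]
      · congr 1
        ext t
        simp only [Finset.mem_union, Finset.mem_filter]
        constructor
        · rintro ⟨h1, h2⟩
          rcases eq_or_lt_of_le h2 with h | h
          · exact Or.inr ⟨h1, h.symm⟩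
          · exact Or.inl ⟨h1, by omega⟩
        · rintro (⟨h1, h2⟩ | ⟨h1, h2⟩)
          · exact ⟨h1, by omega⟩
          · exact ⟨h1, by omega⟩
      · rw [Finset.disjoint_left]
        intro t ht1 ht2
        have h1 := (Finset.mem_filter.mp ht1).2
        have h2 := (Finset.mem_filter.mp ht2).2
        omega
    have hsplitR : (R.filter (fun t => start t ≤ B + x)).card
        = (R.filter (fun t => start t ≤ B + x - 1)).card
          + (R.filter (fun t => start t = B + x)).card := by
      rw [← Finset.card_union_of_disjoint]
      · congr 1
        ext t
        simp only [Finset.mem_union, Finset.mem_filter]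
        constructor
        · rintro ⟨h1, h2⟩
          rcases eq_or_lt_of_le h2 with h | h
          · exact Or.inr ⟨h1, h⟩
          · exact Or.inl ⟨h1, by omega⟩
        · rintro (⟨h1, h2⟩ | ⟨h1, h2⟩)
          · exact ⟨h1, by omega⟩
          · exact ⟨h1, by omega⟩
      · rw [Finset.disjoint_left]
        intro t ht1 ht2
        have h1 := (Finset.mem_filter.mp ht1).2
        have h2 := (Finset.mem_filter.mp ht2).2
        omega
    have heq1 : (P.filter (fun t => x ≤ taskLen q E t)).card
        + (R.filter (fun t => start t ≤ B + x - 1)).card = 4 := by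
      rw [← hPu, ← hRu, ← hdecomp]
      exact hcov _ hu1
    have heq2 : (P.filter (fun t => x + 1 ≤ taskLen q E t)).card
        + (R.filter (fun t => start t ≤ B + x)).card = 4 := by
      rw [← hPu', ← hRu', ← hdecomp]
      exact hcov _ hu2
    have hkey : 1 ≤ (R.filter (fun t => start t = B + x)).card := by
      have hp_in : p ∈ P.filter (fun t => taskLen q E t = x) :=
        Finset.mem_filter.mpr ⟨hp, rfl⟩
      have h1 : 1 ≤ (P.filter (fun t => taskLen q E t = x)).card :=
        Finset.card_pos.mpr ⟨p, hp_in⟩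
      omega
    obtain ⟨r, hr⟩ := Finset.card_pos.mp
      (show 0 < (R.filter (fun t => start t = B + x)).card by omega)
    obtain ⟨hrR, hrs⟩ := Finset.mem_filter.mp hr
    refine ⟨r, hrR, ?_⟩
    have := hRend r hrR
    omega
  -- all P tasks are L-type, paired with same-element R tasks
  have hPtype : ∀ p ∈ P, p.2 = true ∧ (p.1, false) ∈ R := by
    intro p hp
    obtain ⟨r, hrR, hlen2A⟩ := hpair p hp
    have hrfalse : r.2 = false := hRfalse r hrR
    have hvp := hval p (hPsub hp)
    have hvr := hval r (hRsub hrR)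
    have hlp := len_eq q E p
    have hlr := len_eq q E r
    have hnur : nuT q r = - elemVal q r.1 := by rw [nuT, hrfalse]; simp
    have hsum0 : nuT q p + nuT q r = 0 := by
      rw [← hA] at hlp hlr
      linarith [hlen2A, hlp, hlr]
    rcases Bool.eq_false_or_eq_true p.2 with hp2 | hp2
    swap
    · exfalso
      have hnup : nuT q p = - elemVal q p.1 := by rw [nuT, hp2]; simp
      rw [hnup, hnur] at hsum0
      exact noOpp q p.1 r.1 (by linarith)
    · have hnup : nuT q p = elemVal q p.1 := by rw [nuT, hp2]; simp
      rw [hnup, hnur] at hsum0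
      have heqv : elemVal q p.1 = elemVal q r.1 := by linarith
      have := valInj q E hE p.1 r.1 hvp hvr heqv
      refine ⟨hp2, ?_⟩
      have : r = (p.1, false) := by
        rw [Prod.ext_iff]
        exact ⟨this.symm, hrfalse⟩
      rw [← this]
      exact hrR
  -- the four elements of P
  have hinjP : Set.InjOn Prod.fst (P : Set UTask) := by
    intro p hp p' hp' hfst
    have h1 := (hPtype p hp).1
    have h2 := (hPtype p' hp').1
    rw [Prod.ext_iff]
    exact ⟨hfst, by rw [h1, h2]⟩
  set QS := P.image Prod.fst with hQS
  have hQcard : QS.card = 4 := by rw [hQS, Finset.card_image_of_injOn hinjP, hPcard]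
  have hQval : ∀ u ∈ QS, validElem q E u := by
    intro u hu
    obtain ⟨p, hp, rfl⟩ := Finset.mem_image.mp hu
    exact hval p (hPsub hp)
  have hQsum : ∑ u ∈ QS, elemVal q u = 0 := by
    rw [hQS, Finset.sum_image hinjP]
    rw [← hNP0, hNP]
    apply Finset.sum_congr rfl
    intro p hp
    rw [nuT, (hPtype p hp).1]
    simp
  obtain ⟨i, j, k, hijkE, hXQ, hYQ, hZQ, hHQ, huniq⟩ :=
    quad_structure q E hE QS hQcard hQval hQsum
  -- extract the tasks
  have hget : ∀ u ∈ QS, (u, true) ∈ P := by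
    intro u hu
    obtain ⟨p, hp, rfl⟩ := Finset.mem_image.mp hu
    have := (hPtype p hp).1
    have hpe : p = (p.1, true) := by rw [Prod.ext_iff]; exact ⟨rfl, this⟩
    rw [← hpe]
    exact hp
  have hmemSb : ∀ t ∈ Sb, t ∈ S ∧ sched q E start t ⊆ block q E b :=
    fun t ht => ⟨hSbS t ht, hSbsub t ht⟩
  have hHP : (Elem.H (i,j,k), true) ∈ P := hget _ hHQ
  have hHR : (Elem.H (i,j,k), false) ∈ R := (hPtype _ hHP).2
  refine ⟨i, j, k, hijkE, hmemSb _ (hPsub hHP), hmemSb _ (hRsub hHR),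
    hmemSb _ (hPsub (hget _ hXQ)), hmemSb _ (hPsub (hget _ hYQ)),
    hmemSb _ (hPsub (hget _ hZQ)), ?_⟩
  intro h' hS' hsub'
  have hmem' : (Elem.H h', true) ∈ Sb := Finset.mem_filter.mpr ⟨hS', hsub'⟩
  have hinP : (Elem.H h', true) ∈ P := by
    rcases hPR _ hmem' with h | h
    · exact h
    · have := hRfalse _ h
      simp at this
  have hinQ : Elem.H h' ∈ QS := Finset.mem_image_of_mem _ hinP
  exact (huniq _ hinQ).2.2.2 h' rfl

lemma block_card_le (q : ℕ) (E : Finset (ℕ × ℕ × ℕ)) (S : Finset UTask) (start : UTask → ℤ)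
    (hfeas : Feasible q E S start) (b : ℕ) (hb : b < q) :
    (S.filter (fun t => sched q E start t ⊆ block q E b)).card ≤ 8 := by
  classical
  set A := (Aval q E : ℤ) with hA
  set m := (mu q E : ℤ) with hm
  have hm1 : 1 ≤ m := mu_pos q E
  have hAm : A = 5*m + 4 := Aval_cast q E
  set B := blockStart q E b with hB
  set Sb := S.filter (fun t => sched q E start t ⊆ block q E b) with hSbdef
  have hblock : block q E b = Finset.Ico B (B + 2*A) := by rw [block, hB, hA]
  have hSbS : ∀ t ∈ Sb, t ∈ S := fun t ht => (Finset.mem_filter.mp ht).1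
  have hval : ∀ t ∈ Sb, validElem q E t.1 := fun t ht => hfeas.1 t (hSbS t ht)
  have hlenlb : ∀ t ∈ Sb, 4*m + 5 ≤ taskLen q E t := by
    intro t ht; have := len_lb q E t (hval t ht); rw [← hm] at this; exact this
  have hlenub : ∀ t ∈ Sb, taskLen q E t ≤ A + m - 1 := by
    intro t ht; have := len_ub q E t (hval t ht); rw [← hm, ← hA] at this; linarith
  have hpos : ∀ t ∈ Sb, B ≤ start t ∧ start t + taskLen q E t ≤ B + 2*A := by
    intro t ht
    have hsub := (Finset.mem_filter.mp ht).2
    rw [hblock, sched] at hsub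
    have hlt : start t < start t + taskLen q E t := by linarith [hlenlb t ht]
    exact (Finset.Ico_subset_Ico_iff hlt).mp hsub
  set e0 := B + (A - m) with he0def
  set e1 := B + (A + m - 1) with he1def
  have he0 : e0 ∈ block q E b := by
    rw [hblock, Finset.mem_Ico]; constructor <;> [linarith; linarith]
  have he1 : e1 ∈ block q E b := by
    rw [hblock, Finset.mem_Ico]; constructor <;> [linarith; linarith]
  set P := Sb.filter (fun t => e0 ∈ sched q E start t) with hPdef
  set R := Sb.filter (fun t => e1 ∈ sched q E start t) with hRdef
  have hPR : ∀ t ∈ Sb, t ∈ P ∨ t ∈ R := by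
    intro t ht
    obtain ⟨hp1, hp2⟩ := hpos t ht
    have hl1 := hlenlb t ht
    have hl2 := hlenub t ht
    by_cases hc : start t ≤ e0
    · left
      rw [hPdef, Finset.mem_filter]
      exact ⟨ht, by rw [sched, Finset.mem_Ico]; exact ⟨hc, by linarith⟩⟩
    · right
      push_neg at hc
      rw [hRdef, Finset.mem_filter]
      refine ⟨ht, ?_⟩
      rw [sched, Finset.mem_Ico]
      constructor
      · linarith
      · linarith
  have hP4 : P.card ≤ 4 := count_le_four q E S start hfeas b hb e0 he0
  have hR4 : R.card ≤ 4 := count_le_four q E S start hfeas b hb e1 he1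
  have hsub2 : Sb ⊆ P ∪ R := by
    intro t ht
    rcases hPR t ht with h | h
    · exact Finset.mem_union_left _ h
    · exact Finset.mem_union_right _ h
  calc Sb.card ≤ (P ∪ R).card := Finset.card_le_card hsub2
    _ ≤ P.card + R.card := Finset.card_union_le _ _
    _ ≤ 8 := by omega


/-- If `σ(K)` has a feasible solution consisting of `p + 7q` tasks, then `K` has a
hypermatching of size at least `p`; concretely, the set `M` of hyperedges `h_ℓ ∈ E` such that
both `t_L(h_ℓ)` and `t_R(h_ℓ)` are scheduled inside a block containing exactly 8 scheduled
tasks is a hypermatching of size at least `p`. -/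
theorem schedule_to_matching (q : ℕ) (E : Finset (ℕ × ℕ × ℕ)) (hE : ValidE q E)
    (S : Finset UTask) (start : UTask → ℤ) (hfeas : Feasible q E S start)
    (p : ℕ) (hcard : S.card = p + 7 * q) :
    ∃ M ⊆ E, Matching M ∧ p ≤ M.card ∧
      ∀ h : ℕ × ℕ × ℕ, h ∈ M ↔ h ∈ E ∧ ∃ b < q,
        (S.filter (fun t => sched q E start t ⊆ block q E b)).card = 8 ∧
        (Elem.H h, true) ∈ S ∧ sched q E start (Elem.H h, true) ⊆ block q E b ∧
        (Elem.H h, false) ∈ S ∧ sched q E start (Elem.H h, false) ⊆ block q E b := by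
  classical
  set M := E.filter (fun h => ∃ b < q,
        (S.filter (fun t => sched q E start t ⊆ block q E b)).card = 8 ∧
        (Elem.H h, true) ∈ S ∧ sched q E start (Elem.H h, true) ⊆ block q E b ∧
        (Elem.H h, false) ∈ S ∧ sched q E start (Elem.H h, false) ⊆ block q E b) with hM
  have hchar : ∀ h : ℕ × ℕ × ℕ, h ∈ M ↔ h ∈ E ∧ ∃ b < q,
        (S.filter (fun t => sched q E start t ⊆ block q E b)).card = 8 ∧
        (Elem.H h, true) ∈ S ∧ sched q E start (Elem.H h, true) ⊆ block q E b ∧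
        (Elem.H h, false) ∈ S ∧ sched q E start (Elem.H h, false) ⊆ block q E b := by
    intro h; rw [hM, Finset.mem_filter]
  -- key consequence of block_structure for members of M
  have hMstruct : ∀ h ∈ M, ∀ b < q,
      (S.filter (fun t => sched q E start t ⊆ block q E b)).card = 8 →
      (Elem.H h, true) ∈ S → sched q E start (Elem.H h, true) ⊆ block q E b →
      ((Elem.X h.1, true) ∈ S ∧ sched q E start (Elem.X h.1, true) ⊆ block q E b) ∧
      ((Elem.Y h.2.1, true) ∈ S ∧ sched q E start (Elem.Y h.2.1, true) ⊆ block q E b) ∧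
      ((Elem.Z h.2.2, true) ∈ S ∧ sched q E start (Elem.Z h.2.2, true) ⊆ block q E b) ∧
      (∀ h' : ℕ × ℕ × ℕ, (Elem.H h', true) ∈ S →
        sched q E start (Elem.H h', true) ⊆ block q E b → h' = h) := by
    intro h _ b hb h8 hHS hHsub
    obtain ⟨i, j, k, _, _, _, hX, hY, hZ, huniq⟩ :=
      block_structure q E hE S start hfeas b hb h8
    have hh : h = (i, j, k) := huniq h hHS hHsub
    subst hh
    exact ⟨hX, hY, hZ, fun h' h1 h2 => huniq h' h1 h2⟩
  refine ⟨M, Finset.filter_subset _ _, ?_, ?_, hchar⟩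
  · -- Matching
    intro h hM1 h' hM1' hne
    obtain ⟨hhE, b, hb, h8, hHS, hHsub, _, _⟩ := (hchar h).mp hM1
    obtain ⟨hhE', b', hb', h8', hHS', hHsub', _, _⟩ := (hchar h').mp hM1'
    obtain ⟨hX, hY, hZ, huniq⟩ := hMstruct h hM1 b hb h8 hHS hHsub
    obtain ⟨hX', hY', hZ', huniq'⟩ := hMstruct h' hM1' b' hb' h8' hHS' hHsub'
    have hbb : b ≠ b' := by
      rintro rfl
      exact hne (((huniq h' hHS' hHsub')).symm ▸ rfl)
    refine ⟨?_, ?_, ?_⟩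
    · intro hcon
      apply hbb
      apply block_unique q E start (Elem.X h.1, true) (hfeas.1 _ hX.1) b b' hX.2
      rw [hcon]; exact hX'.2
    · intro hcon
      apply hbb
      apply block_unique q E start (Elem.Y h.2.1, true) (hfeas.1 _ hY.1) b b' hY.2
      rw [hcon]; exact hY'.2
    · intro hcon
      apply hbb
      apply block_unique q E start (Elem.Z h.2.2, true) (hfeas.1 _ hZ.1) b b' hZ.2
      rw [hcon]; exact hZ'.2
  · -- p ≤ M.card
    have hSbi : S = (Finset.range q).biUnion
        (fun b => S.filter (fun t => sched q E start t ⊆ block q E b)) := by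
      ext t
      simp only [Finset.mem_biUnion, Finset.mem_filter, Finset.mem_range]
      constructor
      · intro ht
        obtain ⟨b, hb, hsub⟩ := task_in_block q E S start hfeas t ht
        exact ⟨b, hb, ht, hsub⟩
      · rintro ⟨b, _, ht, _⟩
        exact ht
    have hdisj : ∀ b ∈ Finset.range q, ∀ b' ∈ Finset.range q, b ≠ b' →
        Disjoint (S.filter (fun t => sched q E start t ⊆ block q E b))
          (S.filter (fun t => sched q E start t ⊆ block q E b')) := by
      intro b _ b' _ hne
      rw [Finset.disjoint_left]
      intro t ht ht'
      obtain ⟨htS, hsub⟩ := Finset.mem_filter.mp ht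
      obtain ⟨_, hsub'⟩ := Finset.mem_filter.mp ht'
      exact hne (block_unique q E start t (hfeas.1 t htS) b b' hsub hsub')
    have hsum : S.card = ∑ b ∈ Finset.range q,
        (S.filter (fun t => sched q E start t ⊆ block q E b)).card := by
      conv_lhs => rw [hSbi]
      exact Finset.card_biUnion hdisj
    have hGcard : p ≤ ((Finset.range q).filter
        (fun b => (S.filter (fun t => sched q E start t ⊆ block q E b)).card = 8)).card := by
      have hsplit := Finset.sum_filter_add_sum_filter_not (Finset.range q)
        (fun b => (S.filter (fun t => sched q E start t ⊆ block q E b)).card = 8)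
        (fun b => (S.filter (fun t => sched q E start t ⊆ block q E b)).card)
      have hcardsplit := Finset.card_filter_add_card_filter_not
        (s := Finset.range q)
        (p := fun b => (S.filter (fun t => sched q E start t ⊆ block q E b)).card = 8)
      rw [Finset.card_range] at hcardsplit
      have hGs : ∑ b ∈ (Finset.range q).filter
            (fun b => (S.filter (fun t => sched q E start t ⊆ block q E b)).card = 8),
          (S.filter (fun t => sched q E start t ⊆ block q E b)).card
          = 8 * ((Finset.range q).filter
            (fun b => (S.filter (fun t => sched q E start t ⊆ block q E b)).card = 8)).card := by
        rw [Finset.sum_congr rfl (fun b hb => (Finset.mem_filter.mp hb).2),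
          Finset.sum_const, smul_eq_mul, mul_comm]
      have hNGs : ∑ b ∈ (Finset.range q).filter
            (fun b => ¬ (S.filter (fun t => sched q E start t ⊆ block q E b)).card = 8),
          (S.filter (fun t => sched q E start t ⊆ block q E b)).card
          ≤ 7 * ((Finset.range q).filter
            (fun b => ¬ (S.filter (fun t => sched q E start t ⊆ block q E b)).card = 8)).card := by
        calc ∑ b ∈ (Finset.range q).filter
              (fun b => ¬ (S.filter (fun t => sched q E start t ⊆ block q E b)).card = 8),
            (S.filter (fun t => sched q E start t ⊆ block q E b)).card
            ≤ ∑ _b ∈ (Finset.range q).filter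
              (fun b => ¬ (S.filter (fun t => sched q E start t ⊆ block q E b)).card = 8), 7 := by
              apply Finset.sum_le_sum
              intro b hbmem
              obtain ⟨hbr, hbne⟩ := Finset.mem_filter.mp hbmem
              have := block_card_le q E S start hfeas b (Finset.mem_range.mp hbr)
              omega
          _ = 7 * ((Finset.range q).filter
              (fun b => ¬ (S.filter (fun t => sched q E start t ⊆ block q E b)).card = 8)).card := by
              rw [Finset.sum_const, smul_eq_mul, mul_comm]
      omega
    -- injection from G to M
    set G := (Finset.range q).filter
      (fun b => (S.filter (fun t => sched q E start t ⊆ block q E b)).card = 8) with hG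
    have hexists : ∀ b : ℕ, ∃ h : ℕ × ℕ × ℕ, b ∈ G →
        (h ∈ M ∧ (Elem.H h, true) ∈ S ∧ sched q E start (Elem.H h, true) ⊆ block q E b) := by
      intro b
      by_cases hbG : b ∈ G
      · obtain ⟨hbr, h8⟩ := Finset.mem_filter.mp hbG
        have hb : b < q := Finset.mem_range.mp hbr
        obtain ⟨i, j, k, hijkE, hH, hHf, _, _, _, _⟩ :=
          block_structure q E hE S start hfeas b hb h8
        refine ⟨(i,j,k), fun _ => ⟨?_, hH.1, hH.2⟩⟩
        rw [hM, Finset.mem_filter]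
        exact ⟨hijkE, b, hb, h8, hH.1, hH.2, hHf.1, hHf.2⟩
      · exact ⟨(0,0,0), fun hc => absurd hc hbG⟩
    choose f hf using hexists
    have hinj : Set.InjOn f (G : Set ℕ) := by
      intro b hbG b' hbG' hfeq
      obtain ⟨_, hHS, hHsub⟩ := hf b hbG
      obtain ⟨_, hHS', hHsub'⟩ := hf b' hbG'
      rw [hfeq] at hHsub
      exact block_unique q E start (Elem.H (f b'), true) (hfeas.1 _ hHS') b b' hHsub hHsub'
    have hmaps : ∀ b ∈ G, f b ∈ M := fun b hbG => (hf b hbG).1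
    have := Finset.card_le_card_of_injOn f hmaps hinj
    omega
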